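/- For a forecasting competition with n players (n > 1/p_0) over m binary events with outcome distribution Q on {0,1}^m, in every pure Nash equilibrium all forecasters report vertices of the hypercube (x_i ∈ {0,1}^m) and every outcome y ∈ {0,1}^m with Q(y) > 0 is reported by at least one forecaster. -/

import Mathlib

open Finset
open scoped ENNReal Classical

noncomputable def closestSet {X Y : Type*} {n : ℕ} (d : X → Y → ℝ≥0∞) (xs : Fin n → X)
    (y : Y) : Finset (Fin n) :=
  Finset.univ.filter fun i => ∀ j, d (xs i) y ≤ d (xs j) y

/-- Player `i`'s share of target `y`: `1/|X_min|` if `i` is among the closest players, else 0. -/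
noncomputable def share {X Y : Type*} {n : ℕ} (d : X → Y → ℝ≥0∞) (xs : Fin n → X) (y : Y)
    (i : Fin n) : ℝ :=
  if i ∈ closestSet d xs y then ((closestSet d xs y).card : ℝ)⁻¹ else 0

/-- Player `i`'s expected utility `E_{y∼Q}[π_i]`. -/
noncomputable def utility {X Y : Type*} [Fintype Y] {n : ℕ} (d : X → Y → ℝ≥0∞) (Q : Y → ℝ)
    (xs : Fin n → X) (i : Fin n) : ℝ :=
  ∑ y, Q y * share d xs y i

/-- The vertex of `[0,1]^m` corresponding to an outcome `y ∈ {0,1}^m`. -/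
noncomputable def vert (m : ℕ) (y : Fin m → Bool) : Fin m → ℝ :=
  fun j => if y j then 1 else 0

/-- The `ℓ₂` proximity between a forecast `x ∈ [0,1]^m` and an outcome `y ∈ {0,1}^m`. -/
noncomputable def dForecast (m : ℕ) (x : Fin m → ℝ) (y : Fin m → Bool) : ℝ≥0∞ :=
  ENNReal.ofReal (Real.sqrt (∑ j, (x j - vert m y j) ^ 2))

lemma mem_closestSet_iff {X Y : Type*} {n : ℕ} {d : X → Y → ℝ≥0∞} {xs : Fin n → X}
    {y : Y} {i : Fin n} : i ∈ closestSet d xs y ↔ ∀ j, d (xs i) y ≤ d (xs j) y := by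
  simp [closestSet]

lemma dForecast_eq_zero_iff (m : ℕ) (x : Fin m → ℝ) (y : Fin m → Bool) :
    dForecast m x y = 0 ↔ x = vert m y := by
  constructor
  · intro h
    have h1 : Real.sqrt (∑ j, (x j - vert m y j) ^ 2) ≤ 0 := by
      simpa [dForecast, ENNReal.ofReal_eq_zero] using h
    have h3 : ∑ j, (x j - vert m y j) ^ 2 ≤ 0 := by
      by_contra hc
      push_neg at hc
      exact absurd h1 (not_le.mpr (Real.sqrt_pos.mpr hc))
    have h4 : ∑ j, (x j - vert m y j) ^ 2 = 0 :=
      le_antisymm h3 (Finset.sum_nonneg fun j _ => sq_nonneg _)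
    have h5 := (Finset.sum_eq_zero_iff_of_nonneg (fun j _ => sq_nonneg (x j - vert m y j))).mp h4
    funext j
    have := h5 j (mem_univ j)
    have : x j - vert m y j = 0 := by
      exact pow_eq_zero_iff (n := 2) (by norm_num) |>.mp this
    linarith
  · rintro rfl
    simp [dForecast]

lemma dForecast_self (m : ℕ) (y : Fin m → Bool) : dForecast m (vert m y) y = 0 :=
  (dForecast_eq_zero_iff m _ y).mpr rfl

lemma closestSet_nonempty {X Y : Type*} {n : ℕ} (hn : 0 < n) (d : X → Y → ℝ≥0∞)
    (xs : Fin n → X) (y : Y) : (closestSet d xs y).Nonempty := by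
  have hne : (univ : Finset (Fin n)).Nonempty := ⟨⟨0, hn⟩, mem_univ _⟩
  obtain ⟨i, -, hi⟩ := Finset.exists_min_image univ (fun i => d (xs i) y) hne
  exact ⟨i, mem_closestSet_iff.mpr fun j => hi j (mem_univ j)⟩

lemma share_nonneg {X Y : Type*} {n : ℕ} (d : X → Y → ℝ≥0∞) (xs : Fin n → X) (y : Y)
    (i : Fin n) : 0 ≤ share d xs y i := by
  unfold share
  split
  · positivity
  · exact le_rfl

lemma sum_share {X Y : Type*} {n : ℕ} (hn : 0 < n) (d : X → Y → ℝ≥0∞) (xs : Fin n → X)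
    (y : Y) : ∑ i, share d xs y i = 1 := by
  have hne := closestSet_nonempty hn d xs y
  have hcard : ((closestSet d xs y).card : ℝ) ≠ 0 := by
    exact_mod_cast (Finset.card_pos.mpr hne).ne'
  unfold share
  rw [Finset.sum_ite_mem, Finset.univ_inter, Finset.sum_const, nsmul_eq_mul,
    mul_inv_cancel₀ hcard]

lemma sum_utility {X Y : Type*} [Fintype Y] {n : ℕ} (hn : 0 < n) (d : X → Y → ℝ≥0∞)
    (Q : Y → ℝ) (xs : Fin n → X) : ∑ i, utility d Q xs i = ∑ y, Q y := by
  unfold utility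
  rw [Finset.sum_comm]
  refine Finset.sum_congr rfl fun y _ => ?_
  rw [← Finset.mul_sum, sum_share hn, mul_one]

/-- in a forecasting competition with `n > 1/p₀` forecasters, every pure Nash
equilibrium has all forecasters on vertices of the hypercube, and every outcome with
positive probability is reported by some forecaster. -/
theorem forecasting_pure_nash_extreme_and_covers (m n : ℕ)
    (Q : (Fin m → Bool) → ℝ) (hQpos : ∀ y, 0 < Q y) (hQsum : ∑ y, Q y = 1)
    (p0 : ℝ) (hp0le : ∀ y, p0 ≤ Q y) (hp0mem : ∃ y, Q y = p0)
    (hn : 1 / p0 < n)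
    (xs : Fin n → Fin m → ℝ) (hcube : ∀ i j, xs i j ∈ Set.Icc (0 : ℝ) 1)
    (hnash : ∀ (i : Fin n) (x' : Fin m → ℝ), (∀ j, x' j ∈ Set.Icc (0 : ℝ) 1) →
      utility (dForecast m) Q (Function.update xs i x') i ≤ utility (dForecast m) Q xs i) :
    (∀ i, ∃ y, xs i = vert m y) ∧ (∀ y, 0 < Q y → ∃ i, xs i = vert m y) := by
  have hp0pos : 0 < p0 := by obtain ⟨y, hy⟩ := hp0mem; exact hy ▸ hQpos y
  have hnposR : (0 : ℝ) < n := lt_trans (by positivity) hn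
  have hnpos : 0 < n := by exact_mod_cast hnposR
  have hinvlt : 1 / (n : ℝ) < p0 := by
    rw [div_lt_iff₀ hp0pos] at hn
    rw [div_lt_iff₀ hnposR]
    linarith
  have hvertcube : ∀ y : Fin m → Bool, ∀ j, vert m y j ∈ Set.Icc (0 : ℝ) 1 := by
    intro y j
    unfold vert
    split <;> simp
  -- utility after deviating to a vertex y0 is at least Q y0 / card
  have hdev : ∀ (i : Fin n) (y0 : Fin m → Bool),
      Q y0 * ((closestSet (dForecast m) (Function.update xs i (vert m y0)) y0).card : ℝ)⁻¹
        ≤ utility (dForecast m) Q (Function.update xs i (vert m y0)) i := by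
    intro i y0
    have hmem : i ∈ closestSet (dForecast m) (Function.update xs i (vert m y0)) y0 := by
      refine mem_closestSet_iff.mpr fun j => ?_
      rw [Function.update_self, dForecast_self]
      exact zero_le
    have := Finset.single_le_sum
      (f := fun y => Q y * share (dForecast m) (Function.update xs i (vert m y0)) y i)
      (fun y _ => mul_nonneg (hQpos y).le (share_nonneg _ _ _ _)) (mem_univ y0)
    unfold utility
    refine le_trans (le_of_eq ?_) this
    simp only [share, if_pos hmem]
  -- Coverage
  have hcover : ∀ y, 0 < Q y → ∃ i, xs i = vert m y := by
    intro y0 hQ0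
    by_contra hno
    push_neg at hno
    -- some player has utility ≤ 1/n
    obtain ⟨i, hi⟩ : ∃ i, utility (dForecast m) Q xs i ≤ 1 / n := by
      by_contra h
      push_neg at h
      have hlt : ∑ i : Fin n, (1 / (n : ℝ)) < ∑ i, utility (dForecast m) Q xs i :=
        Finset.sum_lt_sum_of_nonempty ⟨⟨0, hnpos⟩, mem_univ _⟩ fun i _ => h i
      rw [Finset.sum_const, card_univ, Fintype.card_fin, nsmul_eq_mul,
        mul_one_div, div_self (ne_of_gt hnposR), sum_utility hnpos, hQsum] at hlt
      exact lt_irrefl 1 hlt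
    -- deviate to vert y0: unique closest, share 1
    set xs' := Function.update xs i (vert m y0) with hxs'
    have hC : closestSet (dForecast m) xs' y0 = {i} := by
      apply Finset.eq_singleton_iff_unique_mem.mpr
      constructor
      · refine mem_closestSet_iff.mpr fun j => ?_
        rw [hxs', Function.update_self, dForecast_self]
        exact zero_le
      · intro j hj
        by_contra hji
        have hle := mem_closestSet_iff.mp hj i
        rw [hxs', Function.update_self, dForecast_self] at hle
        have h0 : dForecast m (xs' j) y0 = 0 := le_antisymm hle zero_le
        rw [hxs', Function.update_of_ne hji] at h0
        exact hno j ((dForecast_eq_zero_iff m _ _).mp h0)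
    have hge := hdev i y0
    rw [← hxs', hC] at hge
    simp only [Finset.card_singleton, Nat.cast_one, inv_one, mul_one] at hge
    have hnle := hnash i (vert m y0) (hvertcube y0)
    rw [← hxs'] at hnle
    have : Q y0 ≤ 1 / n := le_trans hge (le_trans hnle hi)
    have : p0 ≤ 1 / (n : ℝ) := le_trans (hp0le y0) this
    linarith
  refine ⟨?_, hcover⟩
  -- Extreme points
  intro i
  by_contra hnv
  push_neg at hnv
  have hzero : utility (dForecast m) Q xs i = 0 := by
    unfold utility
    apply Finset.sum_eq_zero
    intro y _
    obtain ⟨j, hj⟩ := hcover y (hQpos y)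
    have hij : dForecast m (xs j) y = 0 := hj ▸ dForecast_self m y
    have hni : i ∉ closestSet (dForecast m) xs y := by
      intro hmem
      have := mem_closestSet_iff.mp hmem j
      rw [hij] at this
      have h0 : dForecast m (xs i) y = 0 := le_antisymm this zero_le
      exact hnv y ((dForecast_eq_zero_iff m _ _).mp h0)
    simp only [share, if_neg hni, mul_zero]
  -- deviating to any vertex gives positive utility
  have y0 : Fin m → Bool := fun _ => false
  have hge := hdev i y0
  have hcpos : (0:ℝ) < ((closestSet (dForecast m) (Function.update xs i (vert m y0)) y0).card : ℝ) := by
    have h := Finset.card_pos.mpr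
      (closestSet_nonempty hnpos (dForecast m) (Function.update xs i (vert m y0)) y0)
    exact_mod_cast h
  have hpos : 0 < Q y0 * ((closestSet (dForecast m) (Function.update xs i (vert m y0)) y0).card : ℝ)⁻¹ :=
    mul_pos (hQpos y0) (inv_pos.mpr hcpos)
  have hnle := hnash i (vert m y0) (hvertcube y0)
  rw [hzero] at hnle
  linarith
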